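/- Let 0 < λ < 1 and let f be holomorphic on 𝔻. If lim_{|a|→1⁻} (1−|a|²)^{(1−λ)/2} |f(a)| = 0 and lim_{|a|→1⁻} (1−|a|²)^{(1−λ)/2} ‖f∘φ_a − f(a)‖_{H²} = 0, then lim_{|a|→1⁻} (1−|a|²)^{(3−λ)/2} |f′(a)| = 0. -/

import Mathlib

open MeasureTheory Complex Set Filter Metric

noncomputable section

/-- The integral mean (1/2π)∫₀^{2π} |g(re^{iθ})|² dθ. -/
def hardyMean (g : ℂ → ℂ) (r : ℝ) : ℝ :=
  (2 * Real.pi)⁻¹ * ∫ θ in (0:ℝ)..(2 * Real.pi), ‖g ((r : ℂ) * Complex.exp (θ * Complex.I))‖ ^ 2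

/-- The Hardy space H² norm ‖g‖_{H²} = (sup_{0<r<1} hardyMean g r)^{1/2}. -/
def hardyNorm (g : ℂ → ℂ) : ℝ :=
  Real.sqrt (sSup {x | ∃ r : ℝ, 0 < r ∧ r < 1 ∧ x = hardyMean g r})

/-- The Möbius automorphism φ_a(z) = (a − z)/(1 − \bar{a}z) of 𝔻. -/
def moebius (a z : ℂ) : ℂ := (a - z) / (1 - (starRingEnd ℂ) a * z)

set_option maxHeartbeats 1000000 in
/-- If f is holomorphic on 𝔻 with (1−|a|²)^{(1−λ)/2}|f(a)| → 0 and
(1−|a|²)^{(1−λ)/2}‖f∘φ_a − f(a)‖_{H²} → 0 as |a| → 1⁻, then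
(1−|a|²)^{(3−λ)/2}|f′(a)| → 0 as |a| → 1⁻. -/
theorem derivative_decay_of_vanishing_morrey_quantities
    (lam : ℝ) (hlam0 : 0 < lam) (hlam1 : lam < 1)
    (f : ℂ → ℂ) (hf : DifferentiableOn ℂ f (ball (0:ℂ) 1))
    (h1 : ∀ ε > 0, ∃ δ > 0, ∀ a ∈ ball (0:ℂ) 1, 1 - δ < ‖a‖ →
      (1 - ‖a‖ ^ 2) ^ ((1 - lam) / 2) * ‖f a‖ < ε)
    (h2 : ∀ ε > 0, ∃ δ > 0, ∀ a ∈ ball (0:ℂ) 1, 1 - δ < ‖a‖ →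
      (1 - ‖a‖ ^ 2) ^ ((1 - lam) / 2) *
        hardyNorm (fun z => f (moebius a z) - f a) < ε) :
    ∀ ε > 0, ∃ δ > 0, ∀ a ∈ ball (0:ℂ) 1, 1 - δ < ‖a‖ →
      (1 - ‖a‖ ^ 2) ^ ((3 - lam) / 2) * ‖deriv f a‖ < ε := by
  intro ε hε
  set p : ℝ := (1 - lam) / 2 with hp
  have hp0 : 0 < p := by rw [hp]; linarith
  have hp2 : p ≤ 1 / 2 := by rw [hp]; linarith
  obtain ⟨δ₁, hδ₁, H1⟩ := h1 (ε / 16) (by positivity)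
  refine ⟨min (2 * δ₁ / 3) (1 / 2), by positivity, ?_⟩
  intro a ha hga
  set t := ‖a‖ with htdef
  have ht1 : t < 1 := by simpa [htdef, Complex.dist_eq] using mem_ball_zero_iff.mp ha
  have ht0 : (0:ℝ) ≤ t := norm_nonneg a
  have hthalf : 1 / 2 < t := by
    have := min_le_right (2 * δ₁ / 3) (1 / 2)
    linarith [hga]
  have htδ : 1 - 2 * δ₁ / 3 < t := by
    have := min_le_left (2 * δ₁ / 3) (1 / 2)
    linarith [hga]
  set ρ : ℝ := (1 - t) / 2 with hρdef
  have hρ : 0 < ρ := by rw [hρdef]; linarith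
  set u : ℝ := 1 - t ^ 2 with hudef
  have hu : 0 < u := by rw [hudef]; nlinarith
  -- bound on the sphere of radius ρ around a
  have hC : ∀ z ∈ Metric.sphere a ρ, ‖f z‖ ≤ (ε / 16) / ((u / 4) ^ p) := by
    intro z hz
    have hzd : dist z a = ρ := mem_sphere.mp hz
    have habs : |‖z‖ - t| ≤ ρ := by
      have := abs_norm_sub_norm_le z a
      simpa [Complex.dist_eq, htdef] using this.trans_eq ((dist_eq_norm z a).symm.trans hzd)
    have hz1 : ‖z‖ ≤ (1 + t) / 2 := by
      have := abs_le.mp habs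
      rw [hρdef] at this; linarith [this.2]
    have hz2 : (3 * t - 1) / 2 ≤ ‖z‖ := by
      have := abs_le.mp habs
      rw [hρdef] at this; linarith [this.1]
    have hzball : z ∈ ball (0:ℂ) 1 := by
      rw [mem_ball_zero_iff]
      show ‖z‖ < 1
      linarith
    have hznear : 1 - δ₁ < ‖z‖ := by linarith
    have h1z := H1 z hzball hznear
    have hzsq : u / 4 ≤ 1 - ‖z‖ ^ 2 := by
      rw [hudef]
      nlinarith [norm_nonneg z]
    have hposz : 0 < 1 - ‖z‖ ^ 2 := by
      have : ‖z‖ < 1 := by linarith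
      nlinarith [norm_nonneg z]
    have hpow : (u / 4) ^ p ≤ (1 - ‖z‖ ^ 2) ^ p :=
      Real.rpow_le_rpow (by positivity) hzsq hp0.le
    have hstep : ‖f z‖ ≤ (ε / 16) / (1 - ‖z‖ ^ 2) ^ p := by
      rw [le_div_iff₀ (Real.rpow_pos_of_pos hposz p)]
      calc ‖f z‖ * (1 - ‖z‖ ^ 2) ^ p
          = (1 - ‖z‖ ^ 2) ^ p * ‖f z‖ := by ring
        _ ≤ ε / 16 := h1z.le
    refine hstep.trans ?_
    gcongr
  -- Cauchy estimate
  have hsub : closedBall a ρ ⊆ ball (0:ℂ) 1 := by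
    intro z hz
    rw [mem_ball_zero_iff]
    have hzd : dist z a ≤ ρ := mem_closedBall.mp hz
    have habs : |‖z‖ - t| ≤ ρ :=
      le_trans (by simpa [Complex.dist_eq, htdef] using
        abs_norm_sub_norm_le z a) hzd
    have := (abs_le.mp habs).2
    show ‖z‖ < 1
    rw [hρdef] at this; linarith
  have hd : DiffContOnCl ℂ f (ball a ρ) := by
    apply DifferentiableOn.diffContOnCl
    rw [closure_ball a hρ.ne']
    exact hf.mono hsub
  have hderiv : ‖deriv f a‖ ≤ ((ε / 16) / ((u / 4) ^ p)) / ρ :=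
    Complex.norm_deriv_le_of_forall_mem_sphere_norm_le hρ hd hC
  -- final arithmetic
  have hup : (0:ℝ) < u ^ p := Real.rpow_pos_of_pos hu p
  have h4p : (0:ℝ) < (4:ℝ) ^ p := Real.rpow_pos_of_pos (by norm_num) p
  have hdiv : (u / 4) ^ p = u ^ p / (4:ℝ) ^ p := Real.div_rpow hu.le (by norm_num : (0:ℝ) ≤ 4) p
  have hexp : (1 - t ^ 2) ^ ((3 - lam) / 2) = u ^ p * u := by
    have h32 : (3 - lam) / 2 = p + 1 := by rw [hp]; ring
    rw [← hudef, h32, Real.rpow_add hu, Real.rpow_one]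
  have h4ple : (4:ℝ) ^ p ≤ 2 := by
    have h42 : (4:ℝ) ^ p = (2:ℝ) ^ (2 * p) := by
      rw [Real.rpow_mul (by norm_num : (0:ℝ) ≤ 2)]
      norm_num
    rw [h42]
    calc (2:ℝ) ^ (2 * p) ≤ (2:ℝ) ^ (1:ℝ) :=
          Real.rpow_le_rpow_of_exponent_le one_le_two (by linarith)
      _ = 2 := Real.rpow_one 2
  have huρ : u ≤ 4 * ρ := by rw [hudef, hρdef]; nlinarith
  calc (1 - t ^ 2) ^ ((3 - lam) / 2) * ‖deriv f a‖
      ≤ u ^ p * u * (((ε / 16) / ((u / 4) ^ p)) / ρ) := by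
        rw [hexp]
        exact mul_le_mul_of_nonneg_left hderiv (by positivity)
    _ = (4:ℝ) ^ p * u * (ε / 16) / ρ := by
        rw [hdiv]
        field_simp
    _ < ε := by
        rw [div_lt_iff₀ hρ]
        have key : (4:ℝ) ^ p * u ≤ 8 * ρ := by
          have := mul_le_mul h4ple huρ hu.le (by norm_num : (0:ℝ) ≤ 2)
          linarith
        have key2 : (4:ℝ) ^ p * u * (ε / 16) ≤ 8 * ρ * (ε / 16) :=
          mul_le_mul_of_nonneg_right key (by positivity)
        nlinarith [mul_pos hρ hε]

end
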